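/- arXiv:1506.04411 — 3 statements merged into one kernel-verified Lean document; each statement's English description precedes it below -/
import Mathlib

section
/- Fix n ≥ 1. Let S = ℚ[t₁, …, tₙ] and R = ℚ[t₁, …, tₙ, z₁, …, zₙ] be polynomial rings, and let I ⊆ R be the ideal generated by eₖ(z₁, …, zₙ) − eₖ(t₁, …, tₙ) for k = 1, …, n, where eₖ is the k-th elementary symmetric polynomial. For each permutation w in the symmetric group Sₙ, let ev_w : R/I → S be the ℚ-algebra homomorphism induced by tᵢ ↦ tᵢ and zᵢ ↦ t_{w(i)} (this is well-defined since each generator of I maps to 0). Then the ring homomorphism L : R/I → ∏_{w ∈ Sₙ} S whose w-th component is ev_w is injective. -/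
open MvPolynomial

/-- The ideal of `ℚ[t₁,…,tₙ,z₁,…,zₙ]` generated by `eₖ(z) − eₖ(t)` for `k = 1, …, n`, where the
`t`-variables are indexed by `Sum.inl` and the `z`-variables by `Sum.inr`. -/
noncomputable def borelIdeal (n : ℕ) : Ideal (MvPolynomial (Fin n ⊕ Fin n) ℚ) :=
  Ideal.span (Set.range fun k : Fin n =>
    rename Sum.inr (esymm (Fin n) ℚ ((k : ℕ) + 1)) -
    rename Sum.inl (esymm (Fin n) ℚ ((k : ℕ) + 1)))

/-- `ev` is the family of localization maps: for each permutation `w`, `ev w` is the `ℚ`-algebra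
homomorphism `R/I → S` induced by `tᵢ ↦ tᵢ` and `zᵢ ↦ t_{w(i)}`. -/
def IsLocalizationFamily (n : ℕ)
    (ev : Equiv.Perm (Fin n) →
      (MvPolynomial (Fin n ⊕ Fin n) ℚ ⧸ borelIdeal n) →ₐ[ℚ] MvPolynomial (Fin n) ℚ) : Prop :=
  ∀ (w : Equiv.Perm (Fin n)) (i : Fin n),
    ev w (Ideal.Quotient.mk (borelIdeal n) (X (Sum.inl i))) = X i ∧
    ev w (Ideal.Quotient.mk (borelIdeal n) (X (Sum.inr i))) = X (w i)

section AuxLemmas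

open Matrix

theorem lemB : ∀ (n : ℕ) {A : Type*} [CommRing A] [IsDomain A] (x : Fin n → A)
    (_ : Function.Injective x) (d : Equiv.Perm (Fin n) → A)
    (_ : ∀ a : Fin n → ℕ, (∀ i : Fin n, a i + (i : ℕ) < n) →
      ∑ w : Equiv.Perm (Fin n), d w * ∏ i, x (w i) ^ a i = 0),
    d = 0 := by
  intro n
  induction n with
  | zero =>
    intro A _ _ x hx d hd
    funext w
    have h := hd (fun i => 0) (fun i => i.elim0)
    rw [Fintype.sum_subsingleton _ w] at h
    simpa using h
  | succ n ih =>
    intro A _ _ x hx d hd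
    set y : Fin (n+1) → Fin n → A := fun k i => x (Equiv.swap 0 k i.succ) with hy
    have hyinj : ∀ k, Function.Injective (y k) := by
      intro k a b hab
      exact Fin.succ_injective _ ((Equiv.swap 0 k).injective (hx hab))
    have hE : ∀ (k : Fin (n+1)) (a' : Fin n → ℕ), (∀ i : Fin n, a' i + (i : ℕ) < n) →
        ∑ e : Equiv.Perm (Fin n), d (Equiv.Perm.decomposeFin.symm (k, e)) *
          ∏ i, y k (e i) ^ a' i = 0 := by
      intro k a' ha'
      set E : Fin (n+1) → A := fun k => ∑ e : Equiv.Perm (Fin n),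
        d (Equiv.Perm.decomposeFin.symm (k, e)) * ∏ i, y k (e i) ^ a' i with hEdef
      have hvan : ∀ m : Fin (n+1), ∑ j, x j ^ (m : ℕ) * E j = 0 := by
        intro m
        have hsum := hd (Fin.cons (m : ℕ) a') ?_
        · rw [← hsum]
          rw [← Equiv.sum_comp Equiv.Perm.decomposeFin.symm, Fintype.sum_prod_type]
          refine Finset.sum_congr rfl (fun k _ => ?_)
          rw [hEdef, Finset.mul_sum]
          refine Finset.sum_congr rfl (fun e _ => ?_)
          rw [Fin.prod_univ_succ]
          simp only [Fin.cons_zero, Fin.cons_succ, Equiv.Perm.decomposeFin_symm_apply_zero,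
            Equiv.Perm.decomposeFin_symm_apply_succ]
          ring
        · intro i
          refine Fin.cases ?_ ?_ i
          · simp; have := m.isLt; omega
          · intro j
            have := ha' j
            simp only [Fin.cons_succ, Fin.val_succ]
            omega
      have hdet : (Matrix.vandermonde x).det ≠ 0 := by
        rw [Matrix.det_vandermonde]
        refine Finset.prod_ne_zero_iff.2 (fun i _ => Finset.prod_ne_zero_iff.2 (fun j hj => ?_))
        rw [Finset.mem_Ioi] at hj
        exact sub_ne_zero_of_ne (fun hxy => (ne_of_gt hj) (hx hxy))
      by_contra hne
      have hex : ∃ v ≠ 0, (Matrix.vandermonde x)ᵀ *ᵥ v = 0 := by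
        refine ⟨E, fun h0 => hne ?_, ?_⟩
        · rw [hEdef] at h0
          exact congrFun h0 k
        · funext m
          simpa [Matrix.mulVec, Matrix.vandermonde, dotProduct] using hvan m
      rw [Matrix.exists_mulVec_eq_zero_iff, Matrix.det_transpose] at hex
      exact hdet hex
    funext w
    have hw : Equiv.Perm.decomposeFin.symm (Equiv.Perm.decomposeFin w) = w :=
      Equiv.symm_apply_apply _ _
    have := congrFun (ih (y (Equiv.Perm.decomposeFin w).1) (hyinj _)
      (fun e => d (Equiv.Perm.decomposeFin.symm ((Equiv.Perm.decomposeFin w).1, e)))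
      (hE (Equiv.Perm.decomposeFin w).1)) (Equiv.Perm.decomposeFin w).2
    simpa [hw] using this

theorem prod_fin_sub (n : ℕ) : ∏ i : Fin n, (n - (i : ℕ)) = Nat.factorial n := by
  induction n with
  | zero => simp
  | succ n ih =>
    rw [Fin.prod_univ_succ]
    simp only [Fin.val_zero, Nat.sub_zero, Fin.val_succ]
    have : ∀ i : Fin n, n + 1 - ((i : ℕ) + 1) = n - (i : ℕ) := by intro i; omega
    rw [Finset.prod_congr rfl (fun i _ => this i), ih, Nat.factorial_succ]

theorem card_stair (n : ℕ) :
    Fintype.card (∀ i : Fin n, Fin (n - (i : ℕ))) = Fintype.card (Equiv.Perm (Fin n)) := by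
  rw [Fintype.card_pi, Fintype.card_perm, Fintype.card_fin]
  simp only [Fintype.card_fin]
  exact prod_fin_sub n

theorem colB (n : ℕ) {A : Type*} [CommRing A] [IsDomain A] (x : Fin n → A)
    (hx : Function.Injective x) (c : (∀ i : Fin n, Fin (n - (i : ℕ))) → A)
    (hc : ∀ w : Equiv.Perm (Fin n), ∑ a : ∀ i : Fin n, Fin (n - (i : ℕ)),
      c a * ∏ i, x (w i) ^ ((a i : ℕ)) = 0) : c = 0 := by
  classical
  let e : (∀ i : Fin n, Fin (n - (i : ℕ))) ≃ Equiv.Perm (Fin n) :=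
    Fintype.equivOfCardEq (card_stair n)
  set N : Matrix (Equiv.Perm (Fin n)) (Equiv.Perm (Fin n)) A :=
    fun w v => ∏ i, x (w i) ^ ((e.symm v i : ℕ)) with hN
  by_contra hne
  have hdet : N.det = 0 := by
    rw [← Matrix.exists_mulVec_eq_zero_iff]
    refine ⟨c ∘ e.symm, ?_, ?_⟩
    · intro h0
      exact hne (funext fun a => by simpa using congrFun h0 (e a))
    · funext w
      have := hc w
      rw [← Equiv.sum_comp e.symm (fun a => c a * ∏ i, x (w i) ^ ((a i : ℕ)))] at this
      simpa [Matrix.mulVec, dotProduct, hN, mul_comm] using this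
  obtain ⟨d, hd0, hdv⟩ := Matrix.exists_vecMul_eq_zero_iff.2 hdet
  refine hd0 (lemB n x hx d (fun a ha => ?_))
  have hv := congrFun hdv (e (fun i => ⟨a i, by have := ha i; omega⟩))
  simp only [Matrix.vecMul, dotProduct, hN, Equiv.symm_apply_apply] at hv
  simpa using hv

end AuxLemmas

namespace BorelAux

variable (n : ℕ)

abbrev Rn := MvPolynomial (Fin n ⊕ Fin n) ℚ
abbrev Qn := Rn n ⧸ borelIdeal n
abbrev Sn := MvPolynomial (Fin n) ℚ

noncomputable def Fev (w : Equiv.Perm (Fin n)) :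
    MvPolynomial (Fin n ⊕ Fin n) ℚ →ₐ[ℚ] MvPolynomial (Fin n) ℚ :=
  aeval (Sum.elim X (fun i => X (w i)))

theorem Fev_vanish (w : Equiv.Perm (Fin n)) {p : MvPolynomial (Fin n ⊕ Fin n) ℚ}
    (hp : p ∈ borelIdeal n) : Fev n w p = 0 := by
  have : borelIdeal n ≤ RingHom.ker (Fev n w).toRingHom := by
    rw [borelIdeal, Ideal.span_le]
    rintro q ⟨k, rfl⟩
    have h1 : Fev n w (rename Sum.inl (esymm (Fin n) ℚ ((k : ℕ) + 1))) =
        esymm (Fin n) ℚ ((k : ℕ) + 1) := by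
      rw [Fev, aeval_rename]
      have : (Sum.elim X (fun i => X (w i)) ∘ Sum.inl : Fin n → MvPolynomial (Fin n) ℚ)
          = X := rfl
      rw [this, aeval_X_left_apply]
    have h2 : Fev n w (rename Sum.inr (esymm (Fin n) ℚ ((k : ℕ) + 1))) =
        esymm (Fin n) ℚ ((k : ℕ) + 1) := by
      rw [Fev, aeval_rename]
      have : (Sum.elim X (fun i => X (w i)) ∘ Sum.inr : Fin n → MvPolynomial (Fin n) ℚ)
          = fun i => X (w i) := rfl
      rw [this]
      have : (aeval fun i => (X (w i) : MvPolynomial (Fin n) ℚ)) (esymm (Fin n) ℚ ((k : ℕ) + 1))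
          = rename w (esymm (Fin n) ℚ ((k : ℕ) + 1)) := by rw [rename_eq_aeval]; rfl
      rw [this, rename_esymm]
    rw [SetLike.mem_coe, RingHom.mem_ker, AlgHom.toRingHom_eq_coe, RingHom.coe_coe, map_sub,
      h1, h2, sub_self]
  exact this hp

theorem borelIdeal_ne_top : borelIdeal n ≠ ⊤ := by
  intro h
  have h1 : Fev n 1 1 = 0 := Fev_vanish n 1 (h ▸ Submodule.mem_top)
  rw [map_one] at h1
  exact one_ne_zero h1

instance : Nontrivial (Rn n ⧸ borelIdeal n) :=
  Ideal.Quotient.nontrivial_iff.mpr (borelIdeal_ne_top n)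

noncomputable def mkI : Rn n →ₐ[ℚ] Qn n := Ideal.Quotient.mkₐ ℚ (borelIdeal n)

theorem mk_esymm (m : ℕ) (hm : m ≤ n) :
    mkI n (rename Sum.inl (esymm (Fin n) ℚ m)) = mkI n (rename Sum.inr (esymm (Fin n) ℚ m)) := by
  rcases Nat.eq_zero_or_pos m with hm0 | hm0
  · subst hm0; simp [esymm_zero]
  · rw [mkI, Ideal.Quotient.mkₐ_eq_mk, Ideal.Quotient.eq]
    have hmm : ((⟨m - 1, by omega⟩ : Fin n) : ℕ) + 1 = m := by simp; omega
    have : rename Sum.inr (esymm (Fin n) ℚ m) - rename Sum.inl (esymm (Fin n) ℚ m)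
        ∈ borelIdeal n := Ideal.subset_span ⟨⟨m - 1, by omega⟩, by simp only [hmm]⟩
    simpa [neg_sub] using neg_mem this

theorem key_prod_eq :
    (∏ j : Fin n, (Polynomial.X - Polynomial.C (mkI n (X (Sum.inl j))))) =
    ∏ j : Fin n, (Polynomial.X - Polynomial.C (mkI n (X (Sum.inr j)))) := by
  have hprod : ∀ (f : Fin n → Qn n), (∏ j, (Polynomial.X - Polynomial.C (f j)))
      = ((Finset.univ.val.map f).map (fun t => Polynomial.X - Polynomial.C t)).prod := by
    intro f
    rw [Finset.prod_eq_multiset_prod, Multiset.map_map]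
    rfl
  have hdeg : ∀ (f : Fin n → Qn n),
      (∏ j, (Polynomial.X - Polynomial.C (f j))).natDegree = n := by
    intro f
    rw [Polynomial.natDegree_prod_of_monic _ _ (fun j _ => Polynomial.monic_X_sub_C _)]
    simp only [Polynomial.natDegree_X_sub_C, Finset.sum_const, smul_eq_mul, mul_one,
      Finset.card_univ, Fintype.card_fin]
  have hcard : ∀ (f : Fin n → Qn n), Multiset.card (Finset.univ.val.map f) = n := by
    intro f; simp
  ext d
  rcases le_or_gt d n with hd | hd
  · rw [hprod, hprod, Multiset.prod_X_sub_C_coeff _ (by rw [hcard]; exact hd),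
      Multiset.prod_X_sub_C_coeff _ (by rw [hcard]; exact hd), hcard, hcard]
    congr 1
    have e1 := aeval_esymm_eq_multiset_esymm (σ := Fin n) (R := ℚ) (S := Qn n) (n - d)
      (fun j => mkI n (X (Sum.inl j)))
    have e2 := aeval_esymm_eq_multiset_esymm (σ := Fin n) (R := ℚ) (S := Qn n) (n - d)
      (fun j => mkI n (X (Sum.inr j)))
    rw [← e1, ← e2]
    have h1 : ∀ (g : Fin n → Rn n), (aeval (fun j => mkI n (g j)))
        (esymm (Fin n) ℚ (n - d)) = mkI n (aeval g (esymm (Fin n) ℚ (n - d))) := by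
      intro g
      rw [comp_aeval_apply]
    rw [h1, h1]
    have h2 : ∀ (s : Fin n → Fin n ⊕ Fin n),
        aeval (fun j => (X (s j) : Rn n)) (esymm (Fin n) ℚ (n - d)) =
        rename s (esymm (Fin n) ℚ (n - d)) := fun s => by rw [rename_eq_aeval]; rfl
    rw [h2, h2]
    exact mk_esymm n (n - d) (by omega)
  · rw [Polynomial.coeff_eq_zero_of_natDegree_lt (by rw [hdeg]; exact hd),
      Polynomial.coeff_eq_zero_of_natDegree_lt (by rw [hdeg]; exact hd)]

noncomputable def psi (k : ℕ) (hk : k ≤ n) : MvPolynomial (Fin n ⊕ Fin k) ℚ →ₐ[ℚ] Rn n :=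
  aeval (Sum.elim (fun j => X (Sum.inl j)) (fun j => X (Sum.inr (Fin.castLE hk j))))

noncomputable def fpoly (k : ℕ) : Polynomial (MvPolynomial (Fin n ⊕ Fin k) ℚ) :=
  ∏ j : Fin n, (Polynomial.X - Polynomial.C (X (Sum.inl j)))

noncomputable def gpoly (k : ℕ) : Polynomial (MvPolynomial (Fin n ⊕ Fin k) ℚ) :=
  ∏ j : Fin k, (Polynomial.X - Polynomial.C (X (Sum.inr j)))

noncomputable def upoly (k : ℕ) : Polynomial (MvPolynomial (Fin n ⊕ Fin k) ℚ) :=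
  fpoly n k /ₘ gpoly n k

noncomputable def upol (k : ℕ) (hk : k ≤ n) : Polynomial (Rn n) :=
  (upoly n k).map (psi n k hk).toRingHom

theorem fpoly_monic (k : ℕ) : (fpoly n k).Monic :=
  Polynomial.monic_prod_of_monic _ _ fun j _ => Polynomial.monic_X_sub_C _

theorem gpoly_monic (k : ℕ) : (gpoly n k).Monic :=
  Polynomial.monic_prod_of_monic _ _ fun j _ => Polynomial.monic_X_sub_C _

theorem natDegree_linprod {R : Type*} [CommRing R] [Nontrivial R] (m : ℕ) (f : Fin m → R) :
    (∏ j : Fin m, (Polynomial.X - Polynomial.C (f j))).natDegree = m := by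
  rw [Polynomial.natDegree_prod_of_monic _ _ (fun j _ => Polynomial.monic_X_sub_C _)]
  simp [Polynomial.natDegree_X_sub_C]

theorem fpoly_natDegree (k : ℕ) : (fpoly n k).natDegree = n := natDegree_linprod n _
theorem gpoly_natDegree (k : ℕ) : (gpoly n k).natDegree = k := natDegree_linprod k _

theorem upoly_monic (k : ℕ) (hk : k ≤ n) : (upoly n k).Monic := by
  have h := Polynomial.leadingCoeff_divByMonic_of_monic (p := fpoly n k) (gpoly_monic n k) ?_
  · rw [Polynomial.Monic, upoly, h]
    exact fpoly_monic n k
  · rw [Polynomial.degree_eq_natDegree (fpoly_monic n k).ne_zero,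
      Polynomial.degree_eq_natDegree (gpoly_monic n k).ne_zero, fpoly_natDegree,
      gpoly_natDegree]
    exact_mod_cast hk

theorem upoly_natDegree (k : ℕ) (hk : k ≤ n) : (upoly n k).natDegree = n - k := by
  rw [upoly, Polynomial.natDegree_divByMonic _ (gpoly_monic n k), fpoly_natDegree,
    gpoly_natDegree]

theorem upol_monic (k : ℕ) (hk : k ≤ n) : (upol n k hk).Monic :=
  (upoly_monic n k hk).map _

theorem upol_natDegree (k : ℕ) (hk : k ≤ n) : (upol n k hk).natDegree = n - k := by
  rw [upol, (upoly_monic n k hk).natDegree_map, upoly_natDegree n k hk]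

theorem psi_inl (k : ℕ) (hk : k ≤ n) (j : Fin n) :
    psi n k hk (X (Sum.inl j)) = X (Sum.inl j) := by
  rw [psi, aeval_X]; rfl

theorem psi_inr (k : ℕ) (hk : k ≤ n) (j : Fin k) :
    psi n k hk (X (Sum.inr j)) = X (Sum.inr (Fin.castLE hk j)) := by
  rw [psi, aeval_X]; rfl

/-- the image of `upol` in the quotient is the product over `j ≥ k`. -/
theorem upol_map_mk (k : ℕ) (hk : k ≤ n) :
    (upol n k hk).map (mkI n).toRingHom =
    ∏ j ∈ Finset.univ.filter (fun j : Fin n => ¬ (j : ℕ) < k),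
      (Polynomial.X - Polynomial.C (mkI n (X (Sum.inr j)))) := by
  have hsplit : (∏ j : Fin n, (Polynomial.X - Polynomial.C (mkI n (X (Sum.inr j))))) =
      (∏ j ∈ Finset.univ.filter (fun j : Fin n => (j : ℕ) < k),
        (Polynomial.X - Polynomial.C (mkI n (X (Sum.inr j))))) *
      ∏ j ∈ Finset.univ.filter (fun j : Fin n => ¬ (j : ℕ) < k),
        (Polynomial.X - Polynomial.C (mkI n (X (Sum.inr j)))) :=
    (Finset.prod_filter_mul_prod_filter_not _ _ _).symm
  have hreindex : (∏ j ∈ Finset.univ.filter (fun j : Fin n => (j : ℕ) < k),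
      (Polynomial.X - Polynomial.C (mkI n (X (Sum.inr j))))) =
      ∏ j : Fin k, (Polynomial.X - Polynomial.C (mkI n (X (Sum.inr (Fin.castLE hk j))))) := by
    refine (Finset.prod_bij' (fun j _ => Fin.castLE hk j)
      (fun j hj => ⟨(j : ℕ), by simpa using (Finset.mem_filter.1 hj).2⟩) ?_ ?_ ?_ ?_ ?_).symm
    · intro j _
      simp [Fin.lt_iff_val_lt_val]
    · intro j hj
      exact Finset.mem_univ _
    · intro j _
      rfl
    · intro j hj
      ext
      rfl
    · intro j _
      rfl
  have hmapg : (gpoly n k).map ((mkI n).toRingHom.comp (psi n k hk).toRingHom) =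
      ∏ j : Fin k, (Polynomial.X - Polynomial.C (mkI n (X (Sum.inr (Fin.castLE hk j))))) := by
    rw [gpoly, Polynomial.map_prod]
    refine Finset.prod_congr rfl (fun j _ => ?_)
    rw [Polynomial.map_sub, Polynomial.map_X, Polynomial.map_C]
    congr 1
    simp [RingHom.comp_apply, psi_inr n k hk j]
  have hmapf : (fpoly n k).map ((mkI n).toRingHom.comp (psi n k hk).toRingHom) =
      ∏ j : Fin n, (Polynomial.X - Polynomial.C (mkI n (X (Sum.inl j)))) := by
    rw [fpoly, Polynomial.map_prod]
    refine Finset.prod_congr rfl (fun j _ => ?_)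
    rw [Polynomial.map_sub, Polynomial.map_X, Polynomial.map_C]
    congr 1
    simp [RingHom.comp_apply, psi_inl n k hk j]
  rw [upol, Polynomial.map_map, upoly, Polynomial.map_divByMonic _ (gpoly_monic n k),
    hmapf, hmapg, key_prod_eq, hsplit, hreindex,
    Polynomial.mul_divByMonic_cancel_left]
  exact Polynomial.monic_prod_of_monic _ _ fun j _ => Polynomial.monic_X_sub_C _

theorem upol_eval_mem (k : ℕ) (hk : k < n) :
    (upol n k hk.le).eval (X (Sum.inr (⟨k, hk⟩ : Fin n))) ∈ borelIdeal n := by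
  rw [← Ideal.Quotient.eq_zero_iff_mem]
  have h1 : Ideal.Quotient.mk (borelIdeal n) ((upol n k hk.le).eval (X (Sum.inr ⟨k, hk⟩)))
      = ((upol n k hk.le).map (mkI n).toRingHom).eval (mkI n (X (Sum.inr ⟨k, hk⟩))) := by
    rw [Polynomial.eval_map]
    exact (Polynomial.eval₂_at_apply (mkI n).toRingHom _).symm
  rw [h1, upol_map_mk n k hk.le, Polynomial.eval_prod]
  refine Finset.prod_eq_zero (i := (⟨k, hk⟩ : Fin n)) ?_ ?_
  · simp
  · rw [Polynomial.eval_sub, Polynomial.eval_X, Polynomial.eval_C, sub_self]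

noncomputable def T : Sn n →ₐ[ℚ] Rn n := rename Sum.inl

noncomputable def zmon (a : Fin n → ℕ) : Rn n := ∏ i, X (Sum.inr i) ^ a i

abbrev Stair := ∀ i : Fin n, Fin (n - (i : ℕ))

noncomputable def zs (a : Stair n) : Rn n := zmon n (fun i => (a i : ℕ))

/-- the set of polynomials expressible as `I + staircase combination` -/
def MM : Set (Rn n) :=
  {p | ∃ c : Stair n → Sn n, p - ∑ a : Stair n, T n (c a) * zs n a ∈ borelIdeal n}

theorem M_I {p : Rn n} (hp : p ∈ borelIdeal n) : p ∈ MM n := by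
  refine ⟨0, ?_⟩
  simpa using hp

theorem M_add {p q : Rn n} (hp : p ∈ MM n) (hq : q ∈ MM n) : p + q ∈ MM n := by
  obtain ⟨c, hc⟩ := hp; obtain ⟨c', hc'⟩ := hq
  refine ⟨c + c', ?_⟩
  have := Ideal.add_mem _ hc hc'
  convert this using 1
  have : ∀ a : Stair n, T n ((c + c') a) * zs n a =
      T n (c a) * zs n a + T n (c' a) * zs n a := by
    intro a; rw [Pi.add_apply, map_add, add_mul]
  rw [Finset.sum_congr rfl (fun a _ => this a), Finset.sum_add_distrib]
  ring

theorem M_sub {p q : Rn n} (hp : p ∈ MM n) (hq : q ∈ MM n) : p - q ∈ MM n := by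
  obtain ⟨c, hc⟩ := hp; obtain ⟨c', hc'⟩ := hq
  refine ⟨c - c', ?_⟩
  have := Ideal.sub_mem _ hc hc'
  convert this using 1
  have : ∀ a : Stair n, T n ((c - c') a) * zs n a =
      T n (c a) * zs n a - T n (c' a) * zs n a := by
    intro a; rw [Pi.sub_apply, map_sub, sub_mul]
  rw [Finset.sum_congr rfl (fun a _ => this a), Finset.sum_sub_distrib]
  ring

theorem M_sum {ι : Type*} (s : Finset ι) (f : ι → Rn n) (hf : ∀ i ∈ s, f i ∈ MM n) :
    (∑ i ∈ s, f i) ∈ MM n := by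
  classical
  induction s using Finset.induction_on with
  | empty => simpa using M_I n (Ideal.zero_mem _)
  | insert a s' hx ih =>
    rw [Finset.sum_insert hx]
    exact M_add n (hf a (Finset.mem_insert_self a s'))
      (ih (fun i hi => hf i (Finset.mem_insert_of_mem hi)))

theorem M_mulT {p : Rn n} (hp : p ∈ MM n) (s : Sn n) : T n s * p ∈ MM n := by
  obtain ⟨c, hc⟩ := hp
  refine ⟨fun a => s * c a, ?_⟩
  have := Ideal.mul_mem_left _ (T n s) hc
  convert this using 1
  rw [mul_sub, Finset.mul_sum]
  congr 1
  refine Finset.sum_congr rfl (fun a _ => ?_)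
  rw [map_mul]; ring

theorem zmon_add (a b : Fin n → ℕ) : zmon n (a + b) = zmon n a * zmon n b := by
  rw [zmon, zmon, zmon, ← Finset.prod_mul_distrib]
  refine Finset.prod_congr rfl (fun i _ => ?_)
  rw [Pi.add_apply, pow_add]

theorem zmon_single (j : Fin n) (e : ℕ) : zmon n (Pi.single j e) = X (Sum.inr j) ^ e := by
  classical
  rw [zmon, Finset.prod_eq_single j (fun i _ hi => by rw [Pi.single_eq_of_ne hi, pow_zero])
    (fun h => absurd (Finset.mem_univ j) h)]
  rw [Pi.single_eq_same]

theorem M_stairmon (a : Fin n → ℕ) (ha : ∀ i : Fin n, a i + (i : ℕ) < n) :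
    zmon n a ∈ MM n := by
  classical
  set sa : Stair n := fun i => ⟨a i, by have := ha i; omega⟩ with hsa
  refine ⟨fun a' => if a' = sa then 1 else 0, ?_⟩
  have : ∑ a' : Stair n, T n (if a' = sa then 1 else 0) * zs n a' = zs n sa := by
    rw [Finset.sum_eq_single sa (fun b _ hb => by rw [if_neg hb, map_zero, zero_mul])
      (fun h => absurd (Finset.mem_univ sa) h), if_pos rfl, map_one, one_mul]
  rw [this]
  have : zs n sa = zmon n a := rfl
  rw [this, sub_self]
  exact Ideal.zero_mem _


theorem main_claim (k : ℕ) (hk : k < n) (m : ℕ)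
    (IH : ∀ a : Fin n → ℕ, (∀ j : Fin n, k < (j : ℕ) → a j + (j : ℕ) < n) →
      a ⟨k, hk⟩ ≤ m → zmon n a ∈ MM n) :
    ∀ q : MvPolynomial (Fin n ⊕ Fin k) ℚ, ∀ B : Fin n → ℕ,
      (∀ j : Fin n, k < (j : ℕ) → B j + (j : ℕ) < n) → B ⟨k, hk⟩ ≤ m →
      psi n k hk.le q * zmon n B ∈ MM n := by
  intro q
  induction q using MvPolynomial.induction_on with
  | C c =>
    intro B hB1 hB2
    have h1 : psi n k hk.le (C c) = T n (C c) := by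
      rw [psi, aeval_C, T]
      simp [algebraMap_eq, rename_C]
    rw [h1]
    exact M_mulT n (IH B hB1 hB2) (C c)
  | add p q hp hq =>
    intro B h1 h2
    rw [map_add, add_mul]
    exact M_add n (hp B h1 h2) (hq B h1 h2)
  | mul_X p v hp =>
    intro B h1 h2
    cases v with
    | inl j =>
      rw [map_mul, psi_inl, mul_comm (psi n k hk.le p) _, mul_assoc]
      have hT : (X (Sum.inl j) : Rn n) = T n (X j) := by rw [T, rename_X]
      rw [hT]
      exact M_mulT n (hp B h1 h2) (X j)
    | inr j =>
      rw [map_mul, psi_inr, mul_assoc]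
      have hz : X (Sum.inr (Fin.castLE hk.le j)) * zmon n B =
          zmon n (B + Pi.single (Fin.castLE hk.le j) 1) := by
        rw [zmon_add, zmon_single, pow_one, mul_comm]
      rw [hz]
      have hne : ∀ j' : Fin n, k ≤ (j' : ℕ) → Fin.castLE hk.le j ≠ j' := by
        intro j' hj' he
        have : (j : ℕ) = (j' : ℕ) := congrArg Fin.val he
        omega
      refine hp _ (fun j' hj' => ?_) ?_
      · rw [Pi.add_apply, Pi.single_eq_of_ne (hne j' hj'.le).symm, add_zero]
        exact h1 j' hj'
      · rw [Pi.add_apply, Pi.single_eq_of_ne (hne ⟨k, hk⟩ le_rfl).symm, add_zero]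
        exact h2

theorem main : ∀ (k : ℕ), k ≤ n → ∀ a : Fin n → ℕ,
    (∀ j : Fin n, k ≤ (j : ℕ) → a j + (j : ℕ) < n) → zmon n a ∈ MM n := by
  intro k
  induction k with
  | zero =>
    intro _ a ha
    exact M_stairmon n a (fun i => ha i (Nat.zero_le _))
  | succ k ihk =>
    intro hkn
    have hk : k < n := by omega
    have ihk' := ihk (le_of_lt hk)
    have inner : ∀ m : ℕ, ∀ a : Fin n → ℕ,
        (∀ j : Fin n, k + 1 ≤ (j : ℕ) → a j + (j : ℕ) < n) →
        a ⟨k, hk⟩ ≤ m → zmon n a ∈ MM n := by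
      intro m
      induction m with
      | zero =>
        intro a h1 h2
        refine ihk' a (fun j hj => ?_)
        rcases Nat.eq_or_lt_of_le hj with he | hlt
        · have hje : j = ⟨k, hk⟩ := Fin.ext he.symm
          rw [hje]
          rw [Nat.le_zero] at h2
          rw [h2]
          simpa using hk
        · exact h1 j hlt
      | succ m ihm =>
        intro a h1 h2
        by_cases hc : a ⟨k, hk⟩ + k < n
        · refine ihk' a (fun j hj => ?_)
          rcases Nat.eq_or_lt_of_le hj with he | hlt
          · have hje : j = ⟨k, hk⟩ := Fin.ext he.symm
            rw [hje]
            exact hc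
          · exact h1 j hlt
        · set p : Fin n := ⟨k, hk⟩ with hpdef
          set e : ℕ := n - k with hedef
          have hape : e ≤ a p := by omega
          set a' : Fin n → ℕ := fun i => if i = p then a p - e else a i with ha'
          have hsplit : a = a' + Pi.single p e := by
            funext i
            by_cases hip : i = p
            · subst hip
              have h3 : a' p = a p - e := by rw [ha']; simp
              rw [Pi.add_apply, h3, Pi.single_eq_same]
              omega
            · have h3 : a' i = a i := by rw [ha']; simp [hip]
              rw [Pi.add_apply, h3, Pi.single_eq_of_ne hip, add_zero]
          have hz : zmon n a = zmon n a' * X (Sum.inr p) ^ e := by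
            rw [hsplit, zmon_add, zmon_single]
          have hco : (upol n k hk.le).coeff e = 1 := by
            have h := (upol_monic n k hk.le).coeff_natDegree
            rwa [upol_natDegree n k hk.le] at h
          have heval : (upol n k hk.le).eval (X (Sum.inr p) : Rn n) =
              (∑ d ∈ Finset.range e, (upol n k hk.le).coeff d * X (Sum.inr p) ^ d)
              + X (Sum.inr p) ^ e := by
            rw [Polynomial.eval_eq_sum_range, upol_natDegree n k hk.le]
            rw [Finset.sum_range_succ, hco, one_mul]
          have hxe : (X (Sum.inr p) : Rn n) ^ e = (upol n k hk.le).eval (X (Sum.inr p))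
              - ∑ d ∈ Finset.range e, (upol n k hk.le).coeff d * X (Sum.inr p) ^ d := by
            rw [heval]; ring
          have hrw : zmon n a = zmon n a' * (upol n k hk.le).eval (X (Sum.inr p))
              - ∑ d ∈ Finset.range e,
                  (upol n k hk.le).coeff d * X (Sum.inr p) ^ d * zmon n a' := by
            rw [hz, hxe, mul_sub, Finset.mul_sum]
            congr 1
            refine Finset.sum_congr rfl (fun d _ => ?_)
            ring
          rw [hrw]
          refine M_sub n (M_I n (Ideal.mul_mem_left _ _ (upol_eval_mem n k hk))) ?_
          refine M_sum n _ _ (fun d hd => ?_)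
          rw [Finset.mem_range] at hd
          have hcoeff : (upol n k hk.le).coeff d = psi n k hk.le ((upoly n k).coeff d) :=
            Polynomial.coeff_map _ _
          have hmon : X (Sum.inr p) ^ d * zmon n a' = zmon n (a' + Pi.single p d) := by
            rw [zmon_add, zmon_single, mul_comm]
          rw [mul_assoc, hcoeff, hmon]
          refine main_claim n k hk m ihm _ _ (fun j hj => ?_) ?_
          · have hjp : j ≠ p := by
              intro he
              rw [he, hpdef] at hj
              exact absurd hj (by simp)
            have h3 : a' j = a j := by rw [ha']; simp [hjp]
            rw [Pi.add_apply, Pi.single_eq_of_ne hjp, add_zero, h3]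
            exact h1 j hj
          · have h3 : a' p = a p - e := by rw [ha']; simp
            rw [Pi.add_apply, Pi.single_eq_same, h3]
            omega
    intro a ha
    exact inner (a ⟨k, hk⟩) a ha le_rfl

theorem spanning (p : Rn n) : p ∈ MM n := by
  have hmono : ∀ a : Fin n → ℕ, zmon n a ∈ MM n := fun a =>
    main n n le_rfl a (fun j hj => absurd j.isLt (by omega))
  induction p using MvPolynomial.induction_on with
  | C c =>
    have h := M_mulT n (hmono 0) (C c)
    have h1 : T n (C c) * zmon n 0 = C c := by
      rw [T, rename_C, zmon]
      simp
    rwa [h1] at h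
  | add p q hp hq => exact M_add n hp hq
  | mul_X p v hp =>
    cases v with
    | inl j =>
      have h := M_mulT n hp (X j)
      have h1 : T n (X j) * p = p * X (Sum.inl j) := by
        rw [T, rename_X]; ring
      rwa [h1] at h
    | inr j =>
      obtain ⟨c, hc⟩ := hp
      have hterm : ∀ a : Stair n, T n (c a) * (zs n a * X (Sum.inr j)) ∈ MM n := by
        intro a
        have : zs n a * X (Sum.inr j) = zmon n ((fun i => (a i : ℕ)) + Pi.single j 1) := by
          rw [zmon_add, zmon_single, pow_one, zs]
        rw [this]
        exact M_mulT n (hmono _) (c a)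
      have hdecomp : p * X (Sum.inr j) =
          (p - ∑ a : Stair n, T n (c a) * zs n a) * X (Sum.inr j)
          + ∑ a : Stair n, T n (c a) * (zs n a * X (Sum.inr j)) := by
        rw [sub_mul, Finset.sum_mul]
        have : ∀ a : Stair n, T n (c a) * zs n a * X (Sum.inr j)
            = T n (c a) * (zs n a * X (Sum.inr j)) := fun a => by ring
        rw [Finset.sum_congr rfl (fun a _ => this a)]
        ring
      rw [hdecomp]
      exact M_add n (M_I n (Ideal.mul_mem_right _ _ hc)) (M_sum n _ _ (fun a _ => hterm a))

end BorelAux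


/-- For `n ≥ 1`, the localization maps `ev_w : ℚ[t,z]/⟨eₖ(z) − eₖ(t)⟩ → ℚ[t]` (induced by
`tᵢ ↦ tᵢ`, `zᵢ ↦ t_{w(i)}`) are well defined, and the combined ring homomorphism
`L : R/I → ∏_{w ∈ Sₙ} S` whose `w`-th component is `ev_w` is injective. -/
theorem localization_injective (n : ℕ) (hn : 1 ≤ n) :
    ∃ ev : Equiv.Perm (Fin n) →
      (MvPolynomial (Fin n ⊕ Fin n) ℚ ⧸ borelIdeal n) →ₐ[ℚ] MvPolynomial (Fin n) ℚ,
      IsLocalizationFamily n ev ∧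
      Function.Injective
        (fun (x : MvPolynomial (Fin n ⊕ Fin n) ℚ ⧸ borelIdeal n)
          (w : Equiv.Perm (Fin n)) => ev w x) := by
  classical
  set ev : Equiv.Perm (Fin n) →
      (MvPolynomial (Fin n ⊕ Fin n) ℚ ⧸ borelIdeal n) →ₐ[ℚ] MvPolynomial (Fin n) ℚ :=
    fun w => Ideal.Quotient.liftₐ (borelIdeal n) (BorelAux.Fev n w)
      (fun a ha => BorelAux.Fev_vanish n w ha) with hev
  have hlift : ∀ (w : Equiv.Perm (Fin n)) (x : MvPolynomial (Fin n ⊕ Fin n) ℚ),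
      ev w (Ideal.Quotient.mk (borelIdeal n) x) = BorelAux.Fev n w x := by
    intro w x
    rw [hev]
    exact Ideal.Quotient.liftₐ_apply _ _ _ _
  refine ⟨ev, ?_, ?_⟩
  · intro w i
    constructor
    · rw [hlift, BorelAux.Fev, aeval_X]
      rfl
    · rw [hlift, BorelAux.Fev, aeval_X]
      rfl
  · intro x y hxy
    have hz : ∀ w, ev w (x - y) = 0 := by
      intro w
      rw [map_sub, sub_eq_zero]
      exact congrFun hxy w
    obtain ⟨p, hp⟩ := Ideal.Quotient.mk_surjective (x - y)
    obtain ⟨c, hc⟩ := BorelAux.spanning n p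
    set s : MvPolynomial (Fin n ⊕ Fin n) ℚ :=
      ∑ a : BorelAux.Stair n, BorelAux.T n (c a) * BorelAux.zs n a with hs
    have hmk : Ideal.Quotient.mk (borelIdeal n) p = Ideal.Quotient.mk (borelIdeal n) s :=
      Ideal.Quotient.eq.mpr hc
    have hFev : ∀ w : Equiv.Perm (Fin n), BorelAux.Fev n w s =
        ∑ a : BorelAux.Stair n, c a * ∏ i, (X (w i) : MvPolynomial (Fin n) ℚ) ^ ((a i : ℕ)) := by
      intro w
      rw [hs, map_sum]
      refine Finset.sum_congr rfl (fun a _ => ?_)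
      rw [map_mul]
      have h1 : BorelAux.Fev n w (BorelAux.T n (c a)) = c a := by
        rw [BorelAux.T, BorelAux.Fev, aeval_rename]
        have h1a : (Sum.elim X (fun i => X (w i)) ∘ Sum.inl : Fin n → MvPolynomial (Fin n) ℚ)
            = X := rfl
        rw [h1a, aeval_X_left_apply]
      have h2 : BorelAux.Fev n w (BorelAux.zs n a) =
          ∏ i, (X (w i) : MvPolynomial (Fin n) ℚ) ^ ((a i : ℕ)) := by
        rw [BorelAux.zs, BorelAux.zmon, map_prod]
        refine Finset.prod_congr rfl (fun i _ => ?_)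
        rw [map_pow, BorelAux.Fev, aeval_X]
        rfl
      rw [h1, h2]
    have hzero : ∀ w : Equiv.Perm (Fin n),
        ∑ a : BorelAux.Stair n, c a * ∏ i, (X (w i) : MvPolynomial (Fin n) ℚ) ^ ((a i : ℕ))
          = 0 := by
      intro w
      rw [← hFev w, ← hlift w s, ← hmk, hp]
      exact hz w
    have hc0 : c = 0 := colB n X X_injective c hzero
    have hs0 : s = 0 := by
      rw [hs]
      rw [show c = 0 from hc0]
      simp
    have hxy0 : x - y = 0 := by
      rw [← hp, hmk, hs0, map_zero]
    exact sub_eq_zero.mp hxy0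
end

section
/- Fix n ≥ 1. Let S = ℚ[t₁, …, tₙ], R = ℚ[t₁, …, tₙ, z₁, …, zₙ], I ⊆ R the ideal generated by eₖ(z₁, …, zₙ) − eₖ(t₁, …, tₙ) for k = 1, …, n, and for w ∈ Sₙ let ev_w : R/I → S be the ℚ-algebra homomorphism induced by tᵢ ↦ tᵢ and zᵢ ↦ t_{w(i)}. Then for every x ∈ R/I, every u ∈ Sₙ, and all indices i ≠ j, the difference ev_u(x) − ev_{(i j)∘u}(x) lies in the principal ideal of S generated by tᵢ − tⱼ, where (i j)∘u denotes u followed by the transposition of i and j. -/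
open MvPolynomial

noncomputable def psiGKM (n : ℕ) (w : Equiv.Perm (Fin n)) :
    MvPolynomial (Fin n ⊕ Fin n) ℚ →ₐ[ℚ] MvPolynomial (Fin n) ℚ :=
  aeval (Sum.elim X (fun i => X (w i)))

lemma psiGKM_vanish (n : ℕ) (w : Equiv.Perm (Fin n)) :
    ∀ a ∈ borelIdeal n, psiGKM n w a = 0 := by
  intro a ha
  have hle : borelIdeal n ≤ RingHom.ker (psiGKM n w).toRingHom := by
    rw [borelIdeal, Ideal.span_le]
    rintro _ ⟨k, rfl⟩
    simp only [SetLike.mem_coe, RingHom.mem_ker, AlgHom.toRingHom_eq_coe, RingHom.coe_coe]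
    rw [map_sub, psiGKM, aeval_rename, aeval_rename]
    have h1 : (Sum.elim X (fun i => X (w i)) : Fin n ⊕ Fin n → MvPolynomial (Fin n) ℚ) ∘ Sum.inl = X := rfl
    have h2 : (Sum.elim X (fun i => X (w i)) : Fin n ⊕ Fin n → MvPolynomial (Fin n) ℚ) ∘ Sum.inr
        = fun i => X (w i) := rfl
    rw [h1, h2, aeval_X_left_apply]
    have : (aeval fun i => X (w i)) (esymm (Fin n) ℚ ((k : ℕ) + 1))
        = rename (⇑w) (esymm (Fin n) ℚ ((k : ℕ) + 1)) := by
      rw [← aeval_X_left_apply (rename (⇑w) (esymm (Fin n) ℚ ((k : ℕ) + 1))), aeval_rename]; rfl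
    rw [this, rename_esymm, sub_self]
  exact hle ha

lemma aeval_sub_mem' {σ R : Type*} [CommRing R] (J : Ideal R) (g g' : σ → R)
    (h : ∀ s, g s - g' s ∈ J) (p : MvPolynomial σ ℚ) [Algebra ℚ R] :
    aeval g p - aeval g' p ∈ J := by
  rw [← Ideal.Quotient.eq_zero_iff_mem, map_sub, sub_eq_zero]
  have key : ∀ (g : σ → R), (Ideal.Quotient.mk J) (aeval g p)
      = aeval (fun s => Ideal.Quotient.mk J (g s)) p := fun g =>
    comp_aeval_apply (f := g) (Ideal.Quotient.mkₐ ℚ J) p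
  rw [key, key]
  have : (fun s => Ideal.Quotient.mk J (g s)) = fun s => Ideal.Quotient.mk J (g' s) :=
    funext fun s => Ideal.Quotient.eq.mpr (h s)
  rw [this]

/-- For `n ≥ 1`, with `ev_w : ℚ[t,z]/⟨eₖ(z) − eₖ(t)⟩ → ℚ[t]` the localization maps (induced by
`tᵢ ↦ tᵢ`, `zᵢ ↦ t_{w(i)}`): for every `x`, every `u ∈ Sₙ`, and all `i ≠ j`, the difference
`ev_u(x) − ev_{(i j)∘u}(x)` lies in the principal ideal generated by `tᵢ − tⱼ`, i.e., classes in
the image of the localization map satisfy the GKM relations. -/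
theorem localization_satisfies_GKM (n : ℕ) (hn : 1 ≤ n) :
    ∃ ev : Equiv.Perm (Fin n) →
      (MvPolynomial (Fin n ⊕ Fin n) ℚ ⧸ borelIdeal n) →ₐ[ℚ] MvPolynomial (Fin n) ℚ,
      IsLocalizationFamily n ev ∧
      ∀ (x : MvPolynomial (Fin n ⊕ Fin n) ℚ ⧸ borelIdeal n)
        (u : Equiv.Perm (Fin n)) (i j : Fin n), i ≠ j →
        ev u x - ev (Equiv.swap i j * u) x ∈
          Ideal.span {(X i - X j : MvPolynomial (Fin n) ℚ)} := by
  refine ⟨fun w => Ideal.Quotient.liftₐ (borelIdeal n) (psiGKM n w) (psiGKM_vanish n w),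
    ?_, ?_⟩
  · intro w i
    constructor <;> simp only [Ideal.Quotient.liftₐ_apply, Ideal.Quotient.lift_mk] <;> simp [psiGKM]
  · intro x u i j hij
    obtain ⟨p, rfl⟩ := Ideal.Quotient.mk_surjective x
    simp only [Ideal.Quotient.liftₐ_apply, Ideal.Quotient.lift_mk]
    refine aeval_sub_mem' _ _ _ (fun s => ?_) p
    cases s with
    | inl k => simp
    | inr k =>
      simp only [Sum.elim_inr, Equiv.Perm.mul_apply]
      rcases eq_or_ne (u k) i with h | h
      · rw [h, Equiv.swap_apply_left]
        exact Ideal.mem_span_singleton_self _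
      · rcases eq_or_ne (u k) j with h' | h'
        · rw [h', Equiv.swap_apply_right]
          rw [show X j - X i = -(X i - X j : MvPolynomial (Fin n) ℚ) by ring]
          exact neg_mem (Ideal.mem_span_singleton_self _)
        · rw [Equiv.swap_apply_of_ne_of_ne h h', sub_self]
          exact Ideal.zero_mem _
end

section
/- Fix n ≥ 1. Let S = ℤ[t₁^{±1}, …, tₙ^{±1}], R = ℤ[t₁^{±1}, …, tₙ^{±1}, z₁^{±1}, …, zₙ^{±1}], I ⊆ R the ideal generated by eₖ(z₁, …, zₙ) − eₖ(t₁, …, tₙ) for k = 1, …, n, and for w ∈ Sₙ let ev_w : R/I → S be the ring homomorphism induced by tᵢ ↦ tᵢ and zᵢ ↦ t_{w(i)}. Then for every x ∈ R/I, every u ∈ Sₙ, and all indices i ≠ j, the difference ev_u(x) − ev_{(i j)∘u}(x) lies in the principal ideal of S generated by 1 − tᵢ tⱼ^{−1}, where (i j)∘u denotes u followed by the transposition of i and j. -/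
/-- The `k`-th elementary symmetric polynomial of a finite family `v` of elements of a
commutative ring. -/
noncomputable def esymmOf {ι R : Type*} [Fintype ι] [CommRing R] (v : ι → R) (k : ℕ) : R :=
  ∑ A ∈ Finset.powersetCard k (Finset.univ : Finset ι), ∏ i ∈ A, v i

/-- The Laurent polynomial ring `ℤ[t₁^{±1},…,tₙ^{±1}]`, realized as the group algebra of `ℤⁿ`
over `ℤ`. -/
abbrev LaurentS (n : ℕ) : Type := AddMonoidAlgebra ℤ (Fin n → ℤ)

/-- The Laurent polynomial ring `ℤ[t₁^{±1},…,tₙ^{±1},z₁^{±1},…,zₙ^{±1}]`. -/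
abbrev LaurentR (n : ℕ) : Type := AddMonoidAlgebra ℤ (Fin n ⊕ Fin n → ℤ)

/-- The Laurent variable `tᵢ` in `ℤ[t₁^{±1},…,tₙ^{±1}]`. -/
noncomputable def tS {n : ℕ} (i : Fin n) : LaurentS n :=
  AddMonoidAlgebra.single (Pi.single i 1) 1

/-- The inverse Laurent variable `tᵢ⁻¹` in `ℤ[t₁^{±1},…,tₙ^{±1}]`. -/
noncomputable def tSinv {n : ℕ} (i : Fin n) : LaurentS n :=
  AddMonoidAlgebra.single (Pi.single i (-1)) 1

/-- The Laurent variable `tᵢ` in `ℤ[t^{±1},z^{±1}]`. -/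
noncomputable def tR {n : ℕ} (i : Fin n) : LaurentR n :=
  AddMonoidAlgebra.single (Pi.single (Sum.inl i) 1) 1

/-- The Laurent variable `zᵢ` in `ℤ[t^{±1},z^{±1}]`. -/
noncomputable def zR {n : ℕ} (i : Fin n) : LaurentR n :=
  AddMonoidAlgebra.single (Pi.single (Sum.inr i) 1) 1

/-- The ideal of `ℤ[t^{±1},z^{±1}]` generated by `eₖ(z) − eₖ(t)` for `k = 1, …, n`. -/
noncomputable def borelIdealK (n : ℕ) : Ideal (LaurentR n) :=
  Ideal.span (Set.range fun k : Fin n =>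
    esymmOf zR ((k : ℕ) + 1) - esymmOf tR ((k : ℕ) + 1))

/-- `ev` is the family of localization maps: for each permutation `w`, `ev w` is the ring
homomorphism `R/I → S` induced by `tᵢ ↦ tᵢ` and `zᵢ ↦ t_{w(i)}`. -/
def IsLocalizationFamilyK (n : ℕ)
    (ev : Equiv.Perm (Fin n) → (LaurentR n ⧸ borelIdealK n) →+* LaurentS n) : Prop :=
  ∀ (w : Equiv.Perm (Fin n)) (i : Fin n),
    ev w (Ideal.Quotient.mk (borelIdealK n) (tR i)) = tS i ∧
    ev w (Ideal.Quotient.mk (borelIdealK n) (zR i)) = tS (w i)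

/- auxiliary definitions and lemmas -/

def sigmaGKM {n : ℕ} (w : Equiv.Perm (Fin n)) : (Fin n ⊕ Fin n → ℤ) →+ (Fin n → ℤ) where
  toFun f := fun a => f (Sum.inl a) + f (Sum.inr (w⁻¹ a))
  map_zero' := by funext a; simp
  map_add' f g := by funext a; simp [Pi.add_apply]; ring

noncomputable def phiGKM {n : ℕ} (w : Equiv.Perm (Fin n)) : LaurentR n →+* LaurentS n :=
  AddMonoidAlgebra.mapDomainRingHom ℤ (sigmaGKM w)

lemma phiGKM_single {n : ℕ} (w : Equiv.Perm (Fin n)) (f : Fin n ⊕ Fin n → ℤ) (c : ℤ) :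
    phiGKM w (AddMonoidAlgebra.single f c) = AddMonoidAlgebra.single (sigmaGKM w f) c := by
  simp [phiGKM, Finsupp.mapDomain_single]

lemma sigmaGKM_inl {n : ℕ} (w : Equiv.Perm (Fin n)) (i : Fin n) :
    sigmaGKM w (Pi.single (Sum.inl i) 1) = Pi.single i 1 := by
  funext a
  simp [sigmaGKM, Pi.single_apply]

lemma sigmaGKM_inr {n : ℕ} (w : Equiv.Perm (Fin n)) (i : Fin n) :
    sigmaGKM w (Pi.single (Sum.inr i) 1) = Pi.single (w i) 1 := by
  funext a
  by_cases h : a = w i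
  · subst h; simp [sigmaGKM, Pi.single_apply]
  · have h' : ¬ w.symm a = i := fun H => h (by rw [← H]; simp)
    simp [sigmaGKM, Pi.single_apply, h, h']

lemma phiGKM_tR {n : ℕ} (w : Equiv.Perm (Fin n)) (i : Fin n) : phiGKM w (tR i) = tS i := by
  rw [tR, phiGKM_single, sigmaGKM_inl]; rfl

lemma phiGKM_zR {n : ℕ} (w : Equiv.Perm (Fin n)) (i : Fin n) : phiGKM w (zR i) = tS (w i) := by
  rw [zR, phiGKM_single, sigmaGKM_inr]; rfl

lemma esymmOf_map {ι R S' : Type*} [Fintype ι] [CommRing R] [CommRing S']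
    (φ : R →+* S') (v : ι → R) (k : ℕ) : φ (esymmOf v k) = esymmOf (fun i => φ (v i)) k := by
  simp [esymmOf, map_sum, map_prod]

lemma esymmOf_comp_perm {ι R : Type*} [Fintype ι] [DecidableEq ι] [CommRing R]
    (v : ι → R) (w : Equiv.Perm ι) (k : ℕ) : esymmOf (fun i => v (w i)) k = esymmOf v k := by
  unfold esymmOf
  refine Finset.sum_nbij' (fun A => A.image w) (fun A => A.image w.symm) ?_ ?_ ?_ ?_ ?_
  · intro A hA
    simp only [Finset.mem_powersetCard] at hA ⊢
    exact ⟨Finset.subset_univ _, by rw [Finset.card_image_of_injective _ w.injective, hA.2]⟩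
  · intro A hA
    simp only [Finset.mem_powersetCard] at hA ⊢
    exact ⟨Finset.subset_univ _, by rw [Finset.card_image_of_injective _ w.symm.injective, hA.2]⟩
  · intro A _; simp [Finset.image_image]
  · intro A _; simp [Finset.image_image]
  · intro A _
    rw [Finset.prod_image (fun a _ b _ h => w.injective h)]

lemma phiGKM_ideal {n : ℕ} (w : Equiv.Perm (Fin n)) :
    ∀ a ∈ borelIdealK n, phiGKM w a = 0 := by
  intro a ha
  rw [borelIdealK] at ha
  have : borelIdealK n ≤ RingHom.ker (phiGKM w) := by
    rw [borelIdealK, Ideal.span_le]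
    rintro x ⟨k, rfl⟩
    simp only [SetLike.mem_coe, RingHom.mem_ker, map_sub, esymmOf_map]
    have h1 : (fun i => phiGKM w (zR i)) = fun i => tS (w i) := by
      funext i; exact phiGKM_zR w i
    have h2 : (fun i => phiGKM w (tR i)) = fun i => tS i := by
      funext i; exact phiGKM_tR w i
    rw [h1, h2, esymmOf_comp_perm (fun i => tS i) w, sub_self]
  exact this (by rwa [borelIdealK])

noncomputable def evGKM {n : ℕ} (w : Equiv.Perm (Fin n)) :
    (LaurentR n ⧸ borelIdealK n) →+* LaurentS n :=
  Ideal.Quotient.lift (borelIdealK n) (phiGKM w) (phiGKM_ideal w)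

-- key divisibility lemma
lemma one_sub_mem_span {n : ℕ} (i j : Fin n) (m : ℤ) :
    (1 : LaurentS n) - AddMonoidAlgebra.single (m • (Pi.single i 1 - Pi.single j 1)) 1 ∈
      Ideal.span {(1 - tS i * tSinv j : LaurentS n)} := by
  set v : Fin n → ℤ := Pi.single i 1 - Pi.single j 1 with hv
  have ha : (tS i * tSinv j : LaurentS n) = AddMonoidAlgebra.single v 1 := by
    rw [tS, tSinv, AddMonoidAlgebra.single_mul_single, mul_one, hv]
    congr 1
    funext a
    by_cases h1 : a = i <;> by_cases h2 : a = j <;>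
      simp [Pi.single_apply, h1, h2, sub_eq_add_neg, apply_ite (Neg.neg : ℤ → ℤ)]
  set a : LaurentS n := AddMonoidAlgebra.single v 1 with hadef
  set b : LaurentS n := AddMonoidAlgebra.single (-v) 1 with hbdef
  have hab : a * b = 1 := by
    rw [hadef, hbdef, AddMonoidAlgebra.single_mul_single, mul_one, add_neg_cancel]
    rfl
  have hpow : ∀ (c : LaurentS n), (1 - a) ∣ (1 - c) → ∀ k : ℕ, (1 - a) ∣ (1 - c ^ k) :=
    fun c hc k => hc.trans (by simpa using sub_dvd_pow_sub_pow (1 : LaurentS n) c k)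
  rw [ha, Ideal.mem_span_singleton]
  rcases m with k | k
  · have : AddMonoidAlgebra.single ((Int.ofNat k) • v) (1 : ℤ) = a ^ k := by
      rw [hadef, AddMonoidAlgebra.single_pow, one_pow, Int.ofNat_eq_coe, natCast_zsmul]
    rw [this]
    exact hpow a dvd_rfl k
  · have : AddMonoidAlgebra.single ((Int.negSucc k) • v) (1 : ℤ) = b ^ (k + 1) := by
      rw [hbdef, AddMonoidAlgebra.single_pow, one_pow]
      congr 1
      rw [Int.negSucc_eq, neg_smul, ← natCast_zsmul, smul_neg]
      push_cast
      ring_nf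
    rw [this]
    refine hpow b ⟨-b, ?_⟩ (k + 1)
    have : a * b = 1 := hab
    ring_nf
    linear_combination -this


lemma single_diff_mem {n : ℕ} (i j : Fin n) (g : Fin n → ℤ) (m : ℤ) (c : ℤ) :
    AddMonoidAlgebra.single (g + m • (Pi.single i 1 - Pi.single j 1)) c
      - AddMonoidAlgebra.single g c ∈
      Ideal.span {(1 - tS i * tSinv j : LaurentS n)} := by
  have key : AddMonoidAlgebra.single (g + m • (Pi.single i 1 - Pi.single j 1)) c
      - AddMonoidAlgebra.single g c
      = -(AddMonoidAlgebra.single g c *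
          ((1 : LaurentS n) - AddMonoidAlgebra.single (m • (Pi.single i 1 - Pi.single j 1)) 1)) := by
    rw [mul_sub, mul_one, AddMonoidAlgebra.single_mul_single, mul_one]
    ring
  rw [key]
  exact neg_mem (Ideal.mul_mem_left _ _ (one_sub_mem_span i j m))

lemma phi_diff_mem {n : ℕ} (u : Equiv.Perm (Fin n)) (i j : Fin n) (hij : i ≠ j)
    (r : LaurentR n) :
    phiGKM u r - phiGKM (Equiv.swap i j * u) r ∈
      Ideal.span {(1 - tS i * tSinv j : LaurentS n)} := by
  induction r using AddMonoidAlgebra.induction_linear with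
  | zero => simp
  | add f g hf hg =>
      rw [map_add, map_add]
      have : phiGKM u f + phiGKM u g - (phiGKM (Equiv.swap i j * u) f + phiGKM (Equiv.swap i j * u) g)
          = (phiGKM u f - phiGKM (Equiv.swap i j * u) f) + (phiGKM u g - phiGKM (Equiv.swap i j * u) g) := by
        ring
      rw [this]
      exact add_mem hf hg
  | single f c =>
      rw [phiGKM_single, phiGKM_single]
      have hkey : sigmaGKM u f = sigmaGKM (Equiv.swap i j * u) f
          + (f (Sum.inr (u⁻¹ i)) - f (Sum.inr (u⁻¹ j))) • (Pi.single i 1 - Pi.single j 1) := by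
        funext a
        have hinv : (Equiv.swap i j * u)⁻¹ a = u⁻¹ (Equiv.swap i j a) := by
          rw [mul_inv_rev, Equiv.Perm.mul_apply, Equiv.swap_inv]
        simp only [sigmaGKM, AddMonoidHom.coe_mk, ZeroHom.coe_mk, Pi.add_apply, hinv,
          Pi.smul_apply, Pi.sub_apply, Pi.single_apply, smul_eq_mul]
        by_cases h1 : a = i
        · subst h1
          rw [Equiv.swap_apply_left]
          simp [hij, Ne.symm]
        · by_cases h2 : a = j
          · subst h2
            rw [Equiv.swap_apply_right]
            simp [hij, Ne.symm hij, h1]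
          · rw [Equiv.swap_apply_of_ne_of_ne h1 h2]
            simp [h1, h2]
      rw [hkey]
      exact single_diff_mem i j _ _ c

/-- For `n ≥ 1`, with `ev_w : ℤ[t^{±1},z^{±1}]/⟨eₖ(z) − eₖ(t)⟩ → ℤ[t^{±1}]` the localization
maps (induced by `tᵢ ↦ tᵢ`, `zᵢ ↦ t_{w(i)}`): for every `x`, every `u ∈ Sₙ`, and all `i ≠ j`,
the difference `ev_u(x) − ev_{(i j)∘u}(x)` lies in the principal ideal generated by
`1 − tᵢ tⱼ⁻¹`, i.e., classes in the image of the localization map satisfy the `K`-theoretic GKM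
relations. -/
theorem localization_satisfies_GKM_K (n : ℕ) (hn : 1 ≤ n) :
    ∃ ev : Equiv.Perm (Fin n) → (LaurentR n ⧸ borelIdealK n) →+* LaurentS n,
      IsLocalizationFamilyK n ev ∧
      ∀ (x : LaurentR n ⧸ borelIdealK n) (u : Equiv.Perm (Fin n)) (i j : Fin n), i ≠ j →
        ev u x - ev (Equiv.swap i j * u) x ∈
          Ideal.span {(1 - tS i * tSinv j : LaurentS n)} := by
  refine ⟨fun w => evGKM w, fun w i => ?_, fun x u i j hij => ?_⟩
  · constructor
    · show evGKM w (Ideal.Quotient.mk _ (tR i)) = tS i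
      rw [evGKM, Ideal.Quotient.lift_mk, phiGKM_tR]
    · show evGKM w (Ideal.Quotient.mk _ (zR i)) = tS (w i)
      rw [evGKM, Ideal.Quotient.lift_mk, phiGKM_zR]
  · obtain ⟨r, rfl⟩ := Ideal.Quotient.mk_surjective x
    show evGKM u (Ideal.Quotient.mk _ r) - evGKM (Equiv.swap i j * u) (Ideal.Quotient.mk _ r) ∈ _
    rw [evGKM, evGKM, Ideal.Quotient.lift_mk, Ideal.Quotient.lift_mk]
    exact phi_diff_mem u i j hij r
end
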